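/- Let β = diag(p₁, p₂) with p₁, p₂ > 0, p₁ + p₂ = 1, and n = 2. Let U be the unitary on ℂ² ⊗ ℂ² defined by U(e₁⊗e₁) = i·(e₁⊗e₂), U(e₁⊗e₂) = e₂⊗e₁, U(e₂⊗e₁) = e₂⊗e₂, U(e₂⊗e₂) = e₁⊗e₁. Then the linear map Φ_U − I on M₂(ℂ) has rank 3, where Φ_U(Q) = Tr₂(U(Q⊗β)U*). -/

import Mathlib

open Matrix Kronecker ComplexOrder

/-- Partial trace over the second tensor factor. -/
noncomputable def trace2 {n : ℕ} (T : Matrix (Fin n × Fin n) (Fin n × Fin n) ℂ) :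
    Matrix (Fin n) (Fin n) ℂ :=
  Matrix.of fun i k => ∑ j, T (i, j) (k, j)

/-- The explicit circulant-type unitary of the two-dimensional example:
`e₁⊗e₁ ↦ i·e₁⊗e₂`, `e₁⊗e₂ ↦ e₂⊗e₁`, `e₂⊗e₁ ↦ e₂⊗e₂`, `e₂⊗e₂ ↦ e₁⊗e₁`. -/
noncomputable def U13 : Matrix (Fin 2 × Fin 2) (Fin 2 × Fin 2) ℂ :=
  Matrix.of fun p q =>
    if q = ((0 : Fin 2), (0 : Fin 2)) then (if p = ((0 : Fin 2), (1 : Fin 2)) then Complex.I else 0)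
    else if q = ((0 : Fin 2), (1 : Fin 2)) then (if p = ((1 : Fin 2), (0 : Fin 2)) then 1 else 0)
    else if q = ((1 : Fin 2), (0 : Fin 2)) then (if p = ((1 : Fin 2), (1 : Fin 2)) then 1 else 0)
    else (if p = ((0 : Fin 2), (0 : Fin 2)) then 1 else 0)

lemma fval13 (p : Fin 2 → ℝ) (Q : Matrix (Fin 2) (Fin 2) ℂ) :
    trace2 (U13 * (Q ⊗ₖ Matrix.diagonal fun i => (p i : ℂ)) * U13ᴴ) - Q =
    !![(p 0 : ℂ) * Q 0 0 + (p 1 : ℂ) * Q 1 1 - Q 0 0,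
       Complex.I * (p 0 : ℂ) * Q 0 1 + (p 1 : ℂ) * Q 1 0 - Q 0 1;
       -Complex.I * (p 0 : ℂ) * Q 1 0 + (p 1 : ℂ) * Q 0 1 - Q 1 0,
       (p 0 : ℂ) * Q 1 1 + (p 1 : ℂ) * Q 0 0 - Q 1 1] := by
  ext i k
  fin_cases i <;> fin_cases k
  · simp [trace2, U13, Matrix.mul_apply, Fintype.sum_prod_type, Fin.sum_univ_two,
      Matrix.conjTranspose_apply, Matrix.diagonal, Prod.ext_iff]
    ring_nf
    simp [Complex.I_sq]
  · simp [trace2, U13, Matrix.mul_apply, Fintype.sum_prod_type, Fin.sum_univ_two,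
      Matrix.conjTranspose_apply, Matrix.diagonal, Prod.ext_iff]
    ring
  · simp [trace2, U13, Matrix.mul_apply, Fintype.sum_prod_type, Fin.sum_univ_two,
      Matrix.conjTranspose_apply, Matrix.diagonal, Prod.ext_iff]
    ring
  · simp [trace2, U13, Matrix.mul_apply, Fintype.sum_prod_type, Fin.sum_univ_two,
      Matrix.conjTranspose_apply, Matrix.diagonal, Prod.ext_iff]
    ring

theorem stmt13 (p : Fin 2 → ℝ) (hp : ∀ j, 0 < p j) (hsum : p 0 + p 1 = 1) :
    Module.finrank ℂ (Submodule.span ℂ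
      (Set.range fun Q : Matrix (Fin 2) (Fin 2) ℂ =>
        trace2 (U13 * (Q ⊗ₖ Matrix.diagonal fun i => (p i : ℂ)) * U13ᴴ) - Q)) = 3 := by
  have hsumC : (p 0 : ℂ) + (p 1 : ℂ) = 1 := by exact_mod_cast hsum
  have hp1 : (p 1 : ℂ) ≠ 0 := by exact_mod_cast (hp 1).ne'
  have hdR : (p 0)^2 + 1 - (p 1)^2 ≠ 0 := by
    have h0 := hp 0; have h1 := hp 1; nlinarith
  have hd : (p 0 : ℂ)^2 + 1 - (p 1 : ℂ)^2 ≠ 0 := by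
    have h : (((p 0)^2 + 1 - (p 1)^2 : ℝ) : ℂ) ≠ 0 := by exact_mod_cast hdR
    push_cast at h
    convert h using 2
  set D : Fin 3 → Matrix (Fin 2) (Fin 2) ℂ :=
    ![!![1, 0; 0, -1], !![0, 1; 0, 0], !![0, 0; 1, 0]] with hD
  set f : Matrix (Fin 2) (Fin 2) ℂ → Matrix (Fin 2) (Fin 2) ℂ :=
    fun Q => trace2 (U13 * (Q ⊗ₖ Matrix.diagonal fun i => (p i : ℂ)) * U13ᴴ) - Q with hf
  have hspan : Submodule.span ℂ (Set.range f) = Submodule.span ℂ (Set.range D) := by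
    apply le_antisymm
    · rw [Submodule.span_le]
      rintro _ ⟨Q, rfl⟩
      have heq : f Q =
          ((p 1 : ℂ) * (Q 1 1 - Q 0 0)) • D 0 +
          ((Complex.I * (p 0 : ℂ) - 1) * Q 0 1 + (p 1 : ℂ) * Q 1 0) • D 1 +
          ((p 1 : ℂ) * Q 0 1 + (-Complex.I * (p 0 : ℂ) - 1) * Q 1 0) • D 2 := by
        rw [hf]; dsimp only; rw [fval13]
        ext i k
        fin_cases i <;> fin_cases k
        · simp [hD]
          linear_combination Q 0 0 * hsumC
        · simp [hD]
          ring
        · simp [hD]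
          ring
        · simp [hD]
          linear_combination Q 1 1 * hsumC
      rw [heq]
      refine Submodule.add_mem _ (Submodule.add_mem _ ?_ ?_) ?_ <;>
        exact Submodule.smul_mem _ _ (Submodule.subset_span ⟨_, rfl⟩)
    · rw [Submodule.span_le]
      have m00 : f !![1,0;0,0] ∈ Submodule.span ℂ (Set.range f) :=
        Submodule.subset_span ⟨_, rfl⟩
      have m01 : f !![0,1;0,0] ∈ Submodule.span ℂ (Set.range f) :=
        Submodule.subset_span ⟨_, rfl⟩
      have m10 : f !![0,0;1,0] ∈ Submodule.span ℂ (Set.range f) :=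
        Submodule.subset_span ⟨_, rfl⟩
      set d : ℂ := (p 0 : ℂ)^2 + 1 - (p 1 : ℂ)^2 with hdd
      have hm0 : D 0 ∈ Submodule.span ℂ (Set.range f) := by
        have he : D 0 = (-(p 1 : ℂ)⁻¹) • f !![1,0;0,0] := by
          rw [hf]; dsimp only; rw [fval13]
          ext i k
          fin_cases i <;> fin_cases k
          · simp [hD]
            field_simp
            linear_combination hsumC
          · simp [hD]
          · simp [hD]
          · simp [hD]
            field_simp
        rw [he]
        exact Submodule.smul_mem _ _ m00
      have hm1 : D 1 ∈ Submodule.span ℂ (Set.range f) := by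
        have he : D 1 = ((-Complex.I * (p 0 : ℂ) - 1)/d) • f !![0,1;0,0] +
            (-(p 1 : ℂ)/d) • f !![0,0;1,0] := by
          rw [hf]; dsimp only; rw [fval13, fval13]
          ext i k
          fin_cases i <;> fin_cases k
          · simp [hD]
          · simp [hD]
            field_simp
            linear_combination ((p 0 : ℝ) : ℂ)^2 * Complex.I_sq
          · simp [hD]
            field_simp
            linear_combination (0:ℂ) * Complex.I_sq
          · simp [hD]
        rw [he]
        exact Submodule.add_mem _ (Submodule.smul_mem _ _ m01) (Submodule.smul_mem _ _ m10)
      have hm2 : D 2 ∈ Submodule.span ℂ (Set.range f) := by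
        have he : D 2 = (-(p 1 : ℂ)/d) • f !![0,1;0,0] +
            ((Complex.I * (p 0 : ℂ) - 1)/d) • f !![0,0;1,0] := by
          rw [hf]; dsimp only; rw [fval13, fval13]
          ext i k
          fin_cases i <;> fin_cases k
          · simp [hD]
          · simp [hD]
            field_simp
            linear_combination (0:ℂ) * Complex.I_sq
          · simp [hD]
            field_simp
            linear_combination (((p 0 : ℝ) : ℂ)^2) * Complex.I_sq
          · simp [hD]
        rw [he]
        exact Submodule.add_mem _ (Submodule.smul_mem _ _ m01) (Submodule.smul_mem _ _ m10)
      rintro _ ⟨i, rfl⟩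
      fin_cases i
      exacts [hm0, hm1, hm2]
  rw [hspan]
  have hli : LinearIndependent ℂ D := by
    rw [Fintype.linearIndependent_iff]
    intro g hg
    have h00 := congrFun (congrFun hg 0) 0
    have h01 := congrFun (congrFun hg 0) 1
    have h10 := congrFun (congrFun hg 1) 0
    simp [hD, Fin.sum_univ_three, Matrix.sum_apply] at h00 h01 h10
    intro i; fin_cases i <;> simpa
  rw [finrank_span_eq_card hli]
  simp
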